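/- Let C ⊆ ℝⁿ be a nonempty closed convex set, let f : ℝⁿ → ℝ be differentiable and convex, let x₀ ∈ C, σ > 0, η₀ > 0, and ε ≥ 0. Define f_σ(u) = f(u) + (σ/2)‖u − x₀‖² and let x*_σ be the minimizer of f_σ over C. Suppose y₀ ∈ C satisfies m₀(y₀) ≤ inf_{u ∈ C} m₀(u) + ε, where m₀(u) = ⟨∇f(x₀), u − x₀⟩ + ((σ + η₀)/2)‖u − x₀‖², and also f(y₀) ≤ f(x₀) + ⟨∇f(x₀), y₀ − x₀⟩ + (η₀/2)‖y₀ − x₀‖². Then f_σ(y₀) − f_σ(x*_σ) ≤ (η₀/2)‖x*_σ − x₀‖² + ε. -/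

import Mathlib

open Set
open scoped RealInnerProductSpace

/-- For `f` convex and differentiable, `f_σ(u) = f(u) + (σ/2)‖u - x₀‖²`
with minimizer `xsσ` over the nonempty closed convex set `C`, if `y₀ ∈ C` is an
`ε`-approximate minimizer over `C` of `m₀(u) = ⟪∇f(x₀), u - x₀⟫ + ((σ+η₀)/2)‖u - x₀‖²`
and satisfies the descent condition with estimate `η₀`, then the initial optimality gap
satisfies `f_σ(y₀) - f_σ(xsσ) ≤ (η₀/2)‖xsσ - x₀‖² + ε`. -/

lemma grad_ineq {n : ℕ} (f : EuclideanSpace ℝ (Fin n) → ℝ)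
    (f' : EuclideanSpace ℝ (Fin n) → EuclideanSpace ℝ (Fin n))
    (hgrad : ∀ x, HasGradientAt f (f' x) x)
    (hconv : ConvexOn ℝ Set.univ f)
    (x y : EuclideanSpace ℝ (Fin n)) :
    f x + ⟪f' x, y - x⟫ ≤ f y := by
  rcases eq_or_ne y x with rfl | hne
  · simp
  set g : ℝ → ℝ := fun t => f (x + t • (y - x)) with hg
  have hgconv : ConvexOn ℝ Set.univ g := by
    have := hconv.comp_affineMap (AffineMap.lineMap x y)
    convert this.subset (by simp) convex_univ using 1
    · rfl
    · rfl
    · rfl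
    · rfl
    ext t
    simp only [hg, Function.comp, AffineMap.lineMap_apply_module]
    congr 1
    module
  have hline : HasDerivAt (fun t : ℝ => x + t • (y - x)) (y - x) (0 : ℝ) := by
    simpa using ((hasDerivAt_id (0:ℝ)).smul_const (y - x)).const_add x
  have hgd : HasDerivAt g ⟪f' x, y - x⟫ 0 := by
    have hf : HasFDerivAt f (InnerProductSpace.toDual ℝ _ (f' x) : _ →L[ℝ] ℝ) (x + (0:ℝ) • (y - x)) := by
      simpa using (hgrad x).hasFDerivAt
    have h3 := hf.comp_hasDerivAt 0 hline
    simp at h3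
    exact h3
  have := hgconv.le_slope_of_hasDerivAt (mem_univ (0:ℝ)) (mem_univ (1:ℝ)) one_pos hgd
  rw [slope_def_field] at this
  have h1 : x + (1:ℝ) • (y - x) = y := by simp
  have h0 : x + (0:ℝ) • (y - x) = x := by simp
  simp only [hg, h1, h0] at this
  rw [show (1:ℝ) - 0 = 1 by norm_num, div_one] at this
  linarith


theorem initial_gap_bound
    {n : ℕ} (C : Set (EuclideanSpace ℝ (Fin n)))
    (hCne : C.Nonempty) (hCclosed : IsClosed C) (hCconvex : Convex ℝ C)
    (f : EuclideanSpace ℝ (Fin n) → ℝ) (f' : EuclideanSpace ℝ (Fin n) → EuclideanSpace ℝ (Fin n))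
    (hgrad : ∀ x, HasGradientAt f (f' x) x)
    (hconv : ConvexOn ℝ Set.univ f)
    (x0 : EuclideanSpace ℝ (Fin n)) (hx0C : x0 ∈ C)
    (σ η0 ε : ℝ) (hσ : 0 < σ) (hη0 : 0 < η0) (hε : 0 ≤ ε)
    (xsσ : EuclideanSpace ℝ (Fin n)) (hxsσC : xsσ ∈ C)
    (hxsσmin : ∀ u ∈ C,
      f xsσ + (σ / 2) * ‖xsσ - x0‖ ^ 2 ≤ f u + (σ / 2) * ‖u - x0‖ ^ 2)
    (y0 : EuclideanSpace ℝ (Fin n)) (hy0C : y0 ∈ C)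
    (hy0m : ∀ u ∈ C,
      ⟪f' x0, y0 - x0⟫ + ((σ + η0) / 2) * ‖y0 - x0‖ ^ 2 ≤
        (⟪f' x0, u - x0⟫ + ((σ + η0) / 2) * ‖u - x0‖ ^ 2) + ε)
    (hy0descent : f y0 ≤ f x0 + ⟪f' x0, y0 - x0⟫ + (η0 / 2) * ‖y0 - x0‖ ^ 2) :
    (f y0 + (σ / 2) * ‖y0 - x0‖ ^ 2) - (f xsσ + (σ / 2) * ‖xsσ - x0‖ ^ 2) ≤
      (η0 / 2) * ‖xsσ - x0‖ ^ 2 + ε := by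
  have h1 := hy0m xsσ hxsσC
  have h2 := grad_ineq f f' hgrad hconv x0 xsσ
  linarith [hy0descent]
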